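/- For 0 < p < 1/2, let R(K) = 1 + Kp log₂ p + K(1-p) log₂(1-p) - ∑_{l=0}^{K-1} C(K-1,l)(q^l p^{K-l} + q^{K-l} p^l) log₂(q^l p^{K-l} + q^{K-l} p^l) where q = 1-p. Then R(K) ≤ 1 for all K ≥ 1 and R(K) → 1 as K → ∞. -/

import Mathlib

open Real Filter

/-- Achievable rate of coded transmission with `K` forwarding relays,
effective cross-over probability `p`, `q = 1 - p`. -/
noncomputable def fwdRate (p : ℝ) (K : ℕ) : ℝ :=
  1 + K * p * logb 2 p + K * (1-p) * logb 2 (1-p)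
    - ∑ l ∈ Finset.range K, (Nat.choose (K-1) l : ℝ)
        * ((1-p) ^ l * p ^ (K - l) + (1-p) ^ (K - l) * p ^ l)
        * logb 2 ((1-p) ^ l * p ^ (K - l) + (1-p) ^ (K - l) * p ^ l)

open Real Filter Finset

lemma my_sqrt_pow (x : ℝ) (hx : 0 ≤ x) (n : ℕ) : Real.sqrt (x^n) = (Real.sqrt x)^n := by
  induction n with
  | zero => simp
  | succ n ih => rw [pow_succ, pow_succ, Real.sqrt_mul (pow_nonneg hx n), ih]

lemma my_log_one_add_le (x : ℝ) (hx : 0 ≤ x) : Real.log (1+x) ≤ 2 * Real.sqrt x := by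
  have h1 : Real.log (1+x) = 2 * Real.log (Real.sqrt (1+x)) := by
    rw [Real.log_sqrt (by linarith)]; ring
  have h2 : Real.log (Real.sqrt (1+x)) ≤ Real.sqrt (1+x) - 1 :=
    Real.log_le_sub_one_of_pos (Real.sqrt_pos.mpr (by linarith))
  have h3 : Real.sqrt (1+x) ≤ 1 + Real.sqrt x := by
    rw [show (1:ℝ) + x = 1^2 + x by ring]
    have := Real.sqrt_nonneg x
    have hsq : (1:ℝ)^2 + x ≤ (1 + Real.sqrt x)^2 := by
      have := Real.sq_sqrt hx; nlinarith
    calc Real.sqrt (1^2 + x) ≤ Real.sqrt ((1 + Real.sqrt x)^2) := Real.sqrt_le_sqrt hsq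
      _ = 1 + Real.sqrt x := Real.sqrt_sq (by linarith)
  linarith

/-- key per-term bounds -/
lemma my_gap (b c : ℝ) (hb : 0 < b) (hc : 0 < c) :
    b * logb 2 b + c * logb 2 c ≤ (b+c) * logb 2 (b+c) ∧
    (b+c) * logb 2 (b+c) ≤ b * logb 2 b + c * logb 2 c + 6 * Real.sqrt (b*c) := by
  have hbc : 0 < b + c := by linarith
  constructor
  · have h1 : logb 2 b ≤ logb 2 (b+c) := Real.logb_le_logb_of_le one_lt_two hb (by linarith)
    have h2 : logb 2 c ≤ logb 2 (b+c) := Real.logb_le_logb_of_le one_lt_two hc (by linarith)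
    nlinarith [mul_le_mul_of_nonneg_left h1 hb.le, mul_le_mul_of_nonneg_left h2 hc.le]
  · -- natural-log gap bound
    have key : ∀ u v : ℝ, 0 < u → 0 < v →
        u * (Real.log (u+v) - Real.log u) ≤ 2 * Real.sqrt (u*v) := by
      intro u v hu hv
      have h1 : Real.log (u+v) - Real.log u = Real.log (1 + v/u) := by
        rw [← Real.log_div (by linarith) hu.ne']
        congr 1; field_simp
      have h2 : Real.log (1 + v/u) ≤ 2 * Real.sqrt (v/u) :=
        my_log_one_add_le _ (by positivity)
      have h3 : u * Real.sqrt (v/u) = Real.sqrt (u*v) := by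
        rw [show u * v = u^2 * (v/u) by field_simp,
          Real.sqrt_mul (sq_nonneg u), Real.sqrt_sq hu.le]
      calc u * (Real.log (u+v) - Real.log u) ≤ u * (2 * Real.sqrt (v/u)) := by
            rw [h1]; exact mul_le_mul_of_nonneg_left h2 hu.le
        _ = 2 * Real.sqrt (u*v) := by rw [← h3]; ring
    have k1 := key b c hb hc
    have k2 := key c b hc hb
    rw [show c + b = b + c by ring] at k2
    rw [show c * b = b * c by ring] at k2
    have hln : (b+c) * Real.log (b+c) ≤ b * Real.log b + c * Real.log c
        + 4 * Real.sqrt (b*c) := by nlinarith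
    have hl2 : (0.6931471803 : ℝ) < Real.log 2 := Real.log_two_gt_d9
    have hsn : 0 ≤ Real.sqrt (b*c) := Real.sqrt_nonneg _
    simp only [Real.logb, div_eq_mul_inv]
    have hinv : 0 < (Real.log 2)⁻¹ := by positivity
    have := mul_le_mul_of_nonneg_right hln hinv.le
    have h46 : 4 * Real.sqrt (b*c) * (Real.log 2)⁻¹ ≤ 6 * Real.sqrt (b*c) := by
      rw [mul_inv_le_iff₀ (by linarith : (0:ℝ) < Real.log 2)]
      nlinarith
    nlinarith

lemma my_binom_sum (p q : ℝ) (hpq : q + p = 1) (m : ℕ) :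
    ∑ l ∈ Finset.range (m+1), (Nat.choose m l : ℝ) * (q^l * p^(m-l)) = 1 := by
  have h := add_pow q p m
  rw [hpq, one_pow] at h
  calc ∑ l ∈ Finset.range (m+1), (Nat.choose m l : ℝ) * (q^l * p^(m-l))
      = ∑ l ∈ Finset.range (m+1), q^l * p^(m-l) * (Nat.choose m l : ℝ) :=
        Finset.sum_congr rfl (fun l _ => by ring)
    _ = 1 := h.symm

lemma my_Tm (p q : ℝ) (hp : 0 < p) (hq : 0 < q) (hpq : q + p = 1) (m : ℕ) :
    ∑ l ∈ Finset.range (m+1), (Nat.choose m l : ℝ) * (q^l * p^(m-l))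
        * logb 2 (q^l * p^(m-l))
      = m * (p * logb 2 p + q * logb 2 q) := by
  induction m with
  | zero => simp
  | succ m ih =>
    have hw : ∀ l : ℕ, (0:ℝ) < q^l * p^(m-l) := fun l => by positivity
    -- scaled sum helper
    have hscaled : ∀ x : ℝ, 0 < x →
        ∑ l ∈ Finset.range (m+1), (Nat.choose m l : ℝ)
            * (x * (q^l * p^(m-l))) * logb 2 (x * (q^l * p^(m-l)))
          = x * logb 2 x + x * (m * (p * logb 2 p + q * logb 2 q)) := by
      intro x hx
      have step : ∀ l ∈ Finset.range (m+1),
          (Nat.choose m l : ℝ) * (x * (q^l * p^(m-l))) * logb 2 (x * (q^l * p^(m-l)))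
          = x * logb 2 x * ((Nat.choose m l : ℝ) * (q^l * p^(m-l)))
            + x * ((Nat.choose m l : ℝ) * (q^l * p^(m-l)) * logb 2 (q^l * p^(m-l))) := by
        intro l _
        rw [Real.logb_mul hx.ne' (hw l).ne']
        ring
      rw [Finset.sum_congr rfl step, Finset.sum_add_distrib, ← Finset.mul_sum,
        ← Finset.mul_sum, my_binom_sum p q hpq m, ih]
      ring
    -- peel off l = 0
    rw [Finset.sum_range_succ']
    have hpascal : ∀ l ∈ Finset.range (m+1),
        (Nat.choose (m+1) (l+1) : ℝ) * (q^(l+1) * p^(m+1-(l+1)))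
          * logb 2 (q^(l+1) * p^(m+1-(l+1)))
        = (Nat.choose m l : ℝ) * (q * (q^l * p^(m-l))) * logb 2 (q * (q^l * p^(m-l)))
          + (Nat.choose m (l+1) : ℝ) * (q^(l+1) * p^(m+1-(l+1)))
            * logb 2 (q^(l+1) * p^(m+1-(l+1))) := by
      intro l _
      have h1 : q^(l+1) * p^(m+1-(l+1)) = q * (q^l * p^(m-l)) := by
        rw [Nat.succ_sub_succ, pow_succ]; ring
      rw [Nat.choose_succ_succ' m l, h1]
      push_cast
      ring
    rw [Finset.sum_congr rfl hpascal, Finset.sum_add_distrib]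
    have hB : (∑ l ∈ Finset.range (m+1), (Nat.choose m (l+1) : ℝ)
          * (q^(l+1) * p^(m+1-(l+1))) * logb 2 (q^(l+1) * p^(m+1-(l+1))))
        + (Nat.choose (m+1) 0 : ℝ) * (q^0 * p^(m+1-0)) * logb 2 (q^0 * p^(m+1-0))
        = ∑ j ∈ Finset.range (m+2), (Nat.choose m j : ℝ)
            * (q^j * p^(m+1-j)) * logb 2 (q^j * p^(m+1-j)) := by
      rw [Finset.sum_range_succ' (fun j => (Nat.choose m j : ℝ)
            * (q^j * p^(m+1-j)) * logb 2 (q^j * p^(m+1-j))) (m+1)]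
      norm_num
    rw [add_assoc, hB]
    have hBp : ∀ j ∈ Finset.range (m+1),
        (Nat.choose m j : ℝ) * (q^j * p^(m+1-j)) * logb 2 (q^j * p^(m+1-j))
        = (Nat.choose m j : ℝ) * (p * (q^j * p^(m-j))) * logb 2 (p * (q^j * p^(m-j))) := by
      intro j hj
      have hjm : j ≤ m := Nat.lt_succ_iff.mp (Finset.mem_range.mp hj)
      have hms : m + 1 - j = (m - j) + 1 := by omega
      rw [hms, pow_succ]
      ring_nf
    have hfull : ∑ j ∈ Finset.range (m+2), (Nat.choose m j : ℝ)
          * (q^j * p^(m+1-j)) * logb 2 (q^j * p^(m+1-j))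
        = p * logb 2 p + p * (m * (p * logb 2 p + q * logb 2 q)) := by
      rw [Finset.sum_range_succ, Nat.choose_succ_self, Nat.cast_zero, zero_mul, zero_mul,
        add_zero, Finset.sum_congr rfl hBp, hscaled p hp]
    rw [hfull, hscaled q hq]
    push_cast
    linear_combination (↑m * (q * logb 2 q + p * logb 2 p)) * hpq

lemma my_scaled (p q : ℝ) (hp : 0 < p) (hq : 0 < q) (hpq : q + p = 1) (m : ℕ)
    (x : ℝ) (hx : 0 < x) :
    ∑ l ∈ Finset.range (m+1), (Nat.choose m l : ℝ)
        * (x * (q^l * p^(m-l))) * logb 2 (x * (q^l * p^(m-l)))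
      = x * logb 2 x + x * (m * (p * logb 2 p + q * logb 2 q)) := by
  have hw : ∀ l : ℕ, (0:ℝ) < q^l * p^(m-l) := fun l => by positivity
  have step : ∀ l ∈ Finset.range (m+1),
      (Nat.choose m l : ℝ) * (x * (q^l * p^(m-l))) * logb 2 (x * (q^l * p^(m-l)))
      = x * logb 2 x * ((Nat.choose m l : ℝ) * (q^l * p^(m-l)))
        + x * ((Nat.choose m l : ℝ) * (q^l * p^(m-l)) * logb 2 (q^l * p^(m-l))) := by
    intro l _
    rw [Real.logb_mul hx.ne' (hw l).ne']
    ring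
  rw [Finset.sum_congr rfl step, Finset.sum_add_distrib, ← Finset.mul_sum,
    ← Finset.mul_sum, my_binom_sum p q hpq m, my_Tm p q hp hq hpq m]
  ring

lemma my_identity (p q : ℝ) (hp : 0 < p) (hq : 0 < q) (hpq : q + p = 1) (m : ℕ) :
    ∑ l ∈ Finset.range (m+1), (Nat.choose m l : ℝ)
        * ((q^l * p^(m+1-l)) * logb 2 (q^l * p^(m+1-l))
          + (q^(m+1-l) * p^l) * logb 2 (q^(m+1-l) * p^l))
      = ((m:ℝ)+1) * (p * logb 2 p + q * logb 2 q) := by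
  have hdis : ∀ l ∈ Finset.range (m+1), (Nat.choose m l : ℝ)
      * ((q^l * p^(m+1-l)) * logb 2 (q^l * p^(m+1-l))
        + (q^(m+1-l) * p^l) * logb 2 (q^(m+1-l) * p^l))
      = (Nat.choose m l : ℝ) * ((q^l * p^(m+1-l)) * logb 2 (q^l * p^(m+1-l)))
        + (Nat.choose m l : ℝ) * ((q^(m+1-l) * p^l) * logb 2 (q^(m+1-l) * p^l)) :=
    fun l _ => mul_add _ _ _
  rw [Finset.sum_congr rfl hdis, Finset.sum_add_distrib]
  -- b-part
  have hbp : ∀ l ∈ Finset.range (m+1),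
      (Nat.choose m l : ℝ) * ((q^l * p^(m+1-l)) * logb 2 (q^l * p^(m+1-l)))
      = (Nat.choose m l : ℝ) * (p * (q^l * p^(m-l))) * logb 2 (p * (q^l * p^(m-l))) := by
    intro l hl
    have hlm : l ≤ m := Nat.lt_succ_iff.mp (Finset.mem_range.mp hl)
    have hms : m + 1 - l = (m - l) + 1 := by omega
    rw [hms, pow_succ]
    ring_nf
  -- c-part via reflection
  have hcp : (∑ l ∈ Finset.range (m+1), (Nat.choose m l : ℝ)
        * ((q^(m+1-l) * p^l) * logb 2 (q^(m+1-l) * p^l)))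
      = ∑ l ∈ Finset.range (m+1), (Nat.choose m l : ℝ)
        * (q * (q^l * p^(m-l))) * logb 2 (q * (q^l * p^(m-l))) := by
    rw [← Finset.sum_range_reflect (fun l => (Nat.choose m l : ℝ)
        * ((q^(m+1-l) * p^l) * logb 2 (q^(m+1-l) * p^l))) (m+1)]
    refine Finset.sum_congr rfl ?_
    intro j hj
    have hjm : j ≤ m := Nat.lt_succ_iff.mp (Finset.mem_range.mp hj)
    have h1 : m + 1 - 1 - j = m - j := by omega
    have h2 : m + 1 - (m - j) = j + 1 := by omega
    have h3 : Nat.choose m (m - j) = Nat.choose m j := Nat.choose_symm hjm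
    rw [h1, h2, h3, pow_succ]
    ring_nf
  rw [hcp, Finset.sum_congr rfl hbp, my_scaled p q hp hq hpq m p hp,
    my_scaled p q hp hq hpq m q hq]
  linear_combination (↑m * (q * logb 2 q + p * logb 2 p)) * hpq

lemma my_sandwich (p : ℝ) (hp : 0 < p) (hp' : p < 1/2) (K : ℕ) :
    1 - 3 * (2 * Real.sqrt (p * (1-p)))^K ≤ fwdRate p K ∧ fwdRate p K ≤ 1 := by
  have hq : 0 < 1 - p := by linarith
  set q : ℝ := 1 - p with hqdef
  have hpq : q + p = 1 := by rw [hqdef]; ring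
  have hs0 : 0 ≤ Real.sqrt (p * q) := Real.sqrt_nonneg _
  cases K with
  | zero => simp [fwdRate]
  | succ m =>
    have hb : ∀ l : ℕ, (0:ℝ) < q^l * p^(m+1-l) := fun l => by positivity
    have hc : ∀ l : ℕ, (0:ℝ) < q^(m+1-l) * p^l := fun l => by positivity
    -- fwdRate unfolded
    have hfwd : fwdRate p (m+1) = 1 + ((m:ℝ)+1) * p * logb 2 p
        + ((m:ℝ)+1) * q * logb 2 q
        - ∑ l ∈ Finset.range (m+1), (Nat.choose m l : ℝ)
            * (q^l * p^(m+1-l) + q^(m+1-l) * p^l)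
            * logb 2 (q^l * p^(m+1-l) + q^(m+1-l) * p^l) := by
      simp only [fwdRate, Nat.add_sub_cancel, ← hqdef]
      push_cast
      ring_nf
    -- product of the two terms
    have hprod : ∀ l ∈ Finset.range (m+1),
        Real.sqrt ((q^l * p^(m+1-l)) * (q^(m+1-l) * p^l))
          = Real.sqrt (p*q) ^ (m+1) := by
      intro l hl
      have hlm : l ≤ m := Nat.lt_succ_iff.mp (Finset.mem_range.mp hl)
      have h1 : (q^l * p^(m+1-l)) * (q^(m+1-l) * p^l) = (p*q)^(m+1) := by
        rw [mul_pow, show q^l * p^(m+1-l) * (q^(m+1-l) * p^l)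
            = (q^l * q^(m+1-l)) * (p^(m+1-l) * p^l) by ring, ← pow_add, ← pow_add]
        rw [show l + (m+1-l) = m+1 by omega, show m+1-l+l = m+1 by omega]
        ring
      rw [h1, my_sqrt_pow _ (by positivity)]
    -- termwise bounds
    have hlow : ∀ l ∈ Finset.range (m+1),
        (Nat.choose m l : ℝ) * ((q^l * p^(m+1-l)) * logb 2 (q^l * p^(m+1-l))
          + (q^(m+1-l) * p^l) * logb 2 (q^(m+1-l) * p^l))
        ≤ (Nat.choose m l : ℝ) * (q^l * p^(m+1-l) + q^(m+1-l) * p^l)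
            * logb 2 (q^l * p^(m+1-l) + q^(m+1-l) * p^l) := by
      intro l _
      have := (my_gap _ _ (hb l) (hc l)).1
      have hC : (0:ℝ) ≤ (Nat.choose m l : ℝ) := Nat.cast_nonneg _
      calc (Nat.choose m l : ℝ) * ((q^l * p^(m+1-l)) * logb 2 (q^l * p^(m+1-l))
            + (q^(m+1-l) * p^l) * logb 2 (q^(m+1-l) * p^l))
          ≤ (Nat.choose m l : ℝ) * ((q^l * p^(m+1-l) + q^(m+1-l) * p^l)
              * logb 2 (q^l * p^(m+1-l) + q^(m+1-l) * p^l)) :=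
            mul_le_mul_of_nonneg_left this hC
        _ = _ := by ring
    have hupp : ∀ l ∈ Finset.range (m+1),
        (Nat.choose m l : ℝ) * (q^l * p^(m+1-l) + q^(m+1-l) * p^l)
            * logb 2 (q^l * p^(m+1-l) + q^(m+1-l) * p^l)
        ≤ (Nat.choose m l : ℝ) * ((q^l * p^(m+1-l)) * logb 2 (q^l * p^(m+1-l))
          + (q^(m+1-l) * p^l) * logb 2 (q^(m+1-l) * p^l))
          + (Nat.choose m l : ℝ) * (6 * Real.sqrt (p*q) ^ (m+1)) := by
      intro l hl
      have h2 := (my_gap _ _ (hb l) (hc l)).2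
      rw [hprod l hl] at h2
      have hC : (0:ℝ) ≤ (Nat.choose m l : ℝ) := Nat.cast_nonneg _
      calc (Nat.choose m l : ℝ) * (q^l * p^(m+1-l) + q^(m+1-l) * p^l)
            * logb 2 (q^l * p^(m+1-l) + q^(m+1-l) * p^l)
          = (Nat.choose m l : ℝ) * ((q^l * p^(m+1-l) + q^(m+1-l) * p^l)
            * logb 2 (q^l * p^(m+1-l) + q^(m+1-l) * p^l)) := by ring
        _ ≤ (Nat.choose m l : ℝ) * ((q^l * p^(m+1-l)) * logb 2 (q^l * p^(m+1-l))
            + (q^(m+1-l) * p^l) * logb 2 (q^(m+1-l) * p^l)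
            + 6 * Real.sqrt (p*q) ^ (m+1)) := mul_le_mul_of_nonneg_left h2 hC
        _ = _ := by ring
    have hid := my_identity p q hp hq hpq m
    have hS_low : ((m:ℝ)+1) * (p * logb 2 p + q * logb 2 q)
        ≤ ∑ l ∈ Finset.range (m+1), (Nat.choose m l : ℝ)
            * (q^l * p^(m+1-l) + q^(m+1-l) * p^l)
            * logb 2 (q^l * p^(m+1-l) + q^(m+1-l) * p^l) := by
      rw [← hid]
      exact Finset.sum_le_sum hlow
    have hchoose : ∑ l ∈ Finset.range (m+1), (Nat.choose m l : ℝ) = 2^m := by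
      rw [← Nat.cast_sum]
      rw [Nat.sum_range_choose]
      push_cast; ring
    have hS_upp : (∑ l ∈ Finset.range (m+1), (Nat.choose m l : ℝ)
            * (q^l * p^(m+1-l) + q^(m+1-l) * p^l)
            * logb 2 (q^l * p^(m+1-l) + q^(m+1-l) * p^l))
        ≤ ((m:ℝ)+1) * (p * logb 2 p + q * logb 2 q)
          + 2^m * (6 * Real.sqrt (p*q) ^ (m+1)) := by
      calc (∑ l ∈ Finset.range (m+1), (Nat.choose m l : ℝ)
            * (q^l * p^(m+1-l) + q^(m+1-l) * p^l)
            * logb 2 (q^l * p^(m+1-l) + q^(m+1-l) * p^l))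
          ≤ ∑ l ∈ Finset.range (m+1), ((Nat.choose m l : ℝ)
              * ((q^l * p^(m+1-l)) * logb 2 (q^l * p^(m+1-l))
                + (q^(m+1-l) * p^l) * logb 2 (q^(m+1-l) * p^l))
              + (Nat.choose m l : ℝ) * (6 * Real.sqrt (p*q) ^ (m+1))) :=
            Finset.sum_le_sum hupp
        _ = ((m:ℝ)+1) * (p * logb 2 p + q * logb 2 q)
            + 2^m * (6 * Real.sqrt (p*q) ^ (m+1)) := by
            rw [Finset.sum_add_distrib, hid, ← Finset.sum_mul, hchoose]
    have hpow : 3 * (2 * Real.sqrt (p*q))^(m+1)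
        = 2^m * (6 * Real.sqrt (p*q) ^ (m+1)) := by
      rw [mul_pow, pow_succ]
      ring
    constructor
    · rw [hfwd, hpow]
      linarith
    · rw [hfwd]
      linarith

theorem fwdRate_le_one_tendsto_one (p : ℝ) (hp : 0 < p) (hp' : p < 1/2) :
    (∀ K : ℕ, 1 ≤ K → fwdRate p K ≤ 1) ∧
      Tendsto (fun K : ℕ => fwdRate p K) atTop (nhds 1) := by
  constructor
  · intro K _
    exact (my_sandwich p hp hp' K).2
  · have hs0 : 0 ≤ Real.sqrt (p * (1-p)) := Real.sqrt_nonneg _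
    have hr1 : 2 * Real.sqrt (p * (1-p)) < 1 := by
      have hlt : Real.sqrt (p * (1-p)) < 1/2 := by
        rw [Real.sqrt_lt' (by norm_num : (0:ℝ) < 1/2)]
        nlinarith [mul_pos (by linarith : (0:ℝ) < 1/2 - p) (by linarith : (0:ℝ) < 1/2 - p)]
      linarith
    have hr0 : 0 ≤ 2 * Real.sqrt (p * (1-p)) := by linarith
    have hpow : Tendsto (fun K : ℕ => (2 * Real.sqrt (p * (1-p)))^K) atTop (nhds 0) :=
      tendsto_pow_atTop_nhds_zero_of_lt_one hr0 hr1
    have hlowten : Tendsto (fun K : ℕ => 1 - 3 * (2 * Real.sqrt (p * (1-p)))^K)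
        atTop (nhds 1) := by
      have h1 : Tendsto (fun _ : ℕ => (1:ℝ)) atTop (nhds 1) := tendsto_const_nhds
      have := h1.sub (hpow.const_mul 3)
      simpa using this
    refine tendsto_of_tendsto_of_tendsto_of_le_of_le hlowten tendsto_const_nhds ?_ ?_
    · intro K; exact (my_sandwich p hp hp' K).1
    · intro K; exact (my_sandwich p hp hp' K).2
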